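/- arXiv:2112.09055 — 3 statements merged into one kernel-verified Lean document; each statement's English description precedes it below -/
import Mathlib

section
/- If G is a graph whose minimum and maximum degrees satisfy d_max/d_min = O(1) and whose conductance satisfies Φ_G = Ω(1), then every HC tree of G is an O(1)-approximation of the optimal Dasgupta cost: cost_G(T) ≤ C · OPT_G for a constant C depending only on Φ_G and d_max/d_min. -/
open Finset

/-- A hierarchical clustering (HC) tree: a binary tree with vertex-labelled leaves. -/
inductive HCTree (V : Type) where
  | leaf (v : V) : HCTree V
  | node (l r : HCTree V) : HCTree V

namespace HCTree

variable {V : Type} [Fintype V] [DecidableEq V]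

/-- The list of leaf labels of an HC tree. -/
def leafList : HCTree V → List V
  | leaf v => [v]
  | node l r => leafList l ++ leafList r

/-- The set of leaves of an HC tree. -/
def leaves (t : HCTree V) : Finset V := t.leafList.toFinset

/-- Total weight of (ordered) pairs between two vertex sets:
`w(S,T) = ∑_{u ∈ S, v ∈ T} w(u,v)`. -/
def cut (w : V → V → ℝ) (S T : Finset V) : ℝ := ∑ u ∈ S, ∑ v ∈ T, w u v

/-- The (weighted) degree of a vertex: `d_u = ∑_v w(u,v)`. -/
def deg (w : V → V → ℝ) (u : V) : ℝ := ∑ v, w u v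

/-- The volume of a vertex set: `vol(S) = ∑_{u ∈ S} d_u`. -/
def vol (w : V → V → ℝ) (S : Finset V) : ℝ := ∑ u ∈ S, deg w u

/-- Dasgupta's cost of an HC tree, via the equivalent internal-node formula:
`cost(T) = ∑_{N → (N₁,N₂)} |leaves(T[N])| · w(leaves(N₁), leaves(N₂))`. -/
def cost (w : V → V → ℝ) : HCTree V → ℝ
  | leaf _ => 0
  | node l r =>
      ((leaves (node l r)).card : ℝ) * cut w (leaves l) (leaves r)
        + cost w l + cost w r

/-- `t` is an HC tree of the graph on vertex set `V`: its leaves are distinct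
and are exactly the vertices of `V`. -/
def isHC (t : HCTree V) : Prop := t.leafList.Nodup ∧ t.leaves = Finset.univ

end HCTree

set_option linter.unusedSectionVars false

section Aux
open HCTree
variable {V : Type} [Fintype V] [DecidableEq V]

lemma cut_nonneg' (w : V → V → ℝ) (hw : ∀ u v, 0 ≤ w u v) (S T : Finset V) :
    0 ≤ cut w S T :=
  Finset.sum_nonneg fun u _ => Finset.sum_nonneg fun v _ => hw u v

lemma cut_mono' (w : V → V → ℝ) (hw : ∀ u v, 0 ≤ w u v) {S S' T T' : Finset V}
    (hS : S' ⊆ S) (hT : T' ⊆ T) : cut w S' T' ≤ cut w S T := by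
  calc ∑ u ∈ S', ∑ v ∈ T', w u v
      ≤ ∑ u ∈ S', ∑ v ∈ T, w u v :=
        Finset.sum_le_sum fun u _ =>
          Finset.sum_le_sum_of_subset_of_nonneg hT fun v _ _ => hw u v
    _ ≤ ∑ u ∈ S, ∑ v ∈ T, w u v :=
        Finset.sum_le_sum_of_subset_of_nonneg hS fun u _ _ =>
          Finset.sum_nonneg fun v _ => hw u v

lemma cut_comm' (w : V → V → ℝ) (hsymm : ∀ u v, w u v = w v u) (S T : Finset V) :
    cut w S T = cut w T S := by
  unfold HCTree.cut
  rw [Finset.sum_comm]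
  exact Finset.sum_congr rfl fun v _ => Finset.sum_congr rfl fun u _ => hsymm u v

lemma cut_union_right' (w : V → V → ℝ) {S T₁ T₂ : Finset V} (h : Disjoint T₁ T₂) :
    cut w S (T₁ ∪ T₂) = cut w S T₁ + cut w S T₂ := by
  unfold HCTree.cut
  rw [← Finset.sum_add_distrib]
  exact Finset.sum_congr rfl fun u _ => Finset.sum_union h

lemma cost_nonneg' (w : V → V → ℝ) (hw : ∀ u v, 0 ≤ w u v) (t : HCTree V) :
    0 ≤ cost w t := by
  induction t with
  | leaf v => simp [HCTree.cost]
  | node l r ihl ihr =>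
    have h := cut_nonneg' w hw (leaves l) (leaves r)
    simp only [HCTree.cost]
    positivity

lemma leaves_leaf' (v : V) : leaves (HCTree.leaf v) = {v} := by
  simp [leaves, HCTree.leafList]

lemma leaves_node' (l r : HCTree V) :
    leaves (HCTree.node l r) = leaves l ∪ leaves r := by
  simp [leaves, HCTree.leafList]

lemma nodup_node' {l r : HCTree V} (h : (HCTree.node l r).leafList.Nodup) :
    l.leafList.Nodup ∧ r.leafList.Nodup ∧ Disjoint (leaves l) (leaves r) := by
  rw [HCTree.leafList, List.nodup_append] at h
  exact ⟨h.1, h.2.1, by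
    rw [leaves, leaves, List.disjoint_toFinset_iff_disjoint]; intro a ha hb; exact h.2.2 a ha a hb rfl⟩

lemma cost_le_pair' (w : V → V → ℝ) (hw : ∀ u v, 0 ≤ w u v)
    (hsymm : ∀ u v, w u v = w v u) (t : HCTree V) (hnd : t.leafList.Nodup) :
    cost w t ≤ (Fintype.card V : ℝ) / 2 * ∑ u ∈ leaves t, ∑ v ∈ leaves t, w u v := by
  induction t with
  | leaf v =>
    simp only [HCTree.cost, leaves_leaf', Finset.sum_singleton]
    have := hw v v
    have : (0:ℝ) ≤ (Fintype.card V : ℝ) / 2 := by positivity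
    nlinarith [hw v v]
  | node l r ihl ihr =>
    obtain ⟨hl, hr, hdisj⟩ := nodup_node' hnd
    have hcard : ((leaves (HCTree.node l r)).card : ℝ) ≤ (Fintype.card V : ℝ) := by
      exact_mod_cast Finset.card_le_univ _
    have inner : ∀ u : V, ∑ v ∈ leaves l ∪ leaves r, w u v
        = ∑ v ∈ leaves l, w u v + ∑ v ∈ leaves r, w u v :=
      fun u => Finset.sum_union hdisj
    have hsum : ∑ u ∈ leaves (HCTree.node l r), ∑ v ∈ leaves (HCTree.node l r), w u v
        = (∑ u ∈ leaves l, ∑ v ∈ leaves l, w u v)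
          + (∑ u ∈ leaves r, ∑ v ∈ leaves r, w u v)
          + 2 * cut w (leaves l) (leaves r) := by
      rw [leaves_node', Finset.sum_union hdisj]
      simp_rw [inner]
      rw [Finset.sum_add_distrib, Finset.sum_add_distrib]
      have h2 : ∑ u ∈ leaves r, ∑ v ∈ leaves l, w u v = cut w (leaves l) (leaves r) :=
        (cut_comm' w hsymm (leaves r) (leaves l))
      unfold HCTree.cut at *
      linarith
    have hcut := cut_nonneg' w hw (leaves l) (leaves r)
    have h1 := ihl hl
    have h2 := ihr hr
    simp only [HCTree.cost]
    rw [hsum]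
    nlinarith [mul_le_mul_of_nonneg_right hcard hcut]

lemma cost_lower' (w : V → V → ℝ) (hw : ∀ u v, 0 ≤ w u v)
    (hsymm : ∀ u v, w u v = w v u) (hn : 2 ≤ Fintype.card V) (t : HCTree V)
    (hnd : t.leafList.Nodup) (hbig : 2 * Fintype.card V ≤ 3 * (leaves t).card) :
    ∃ S : Finset V, S ⊆ leaves t ∧ Fintype.card V ≤ 3 * S.card ∧
      3 * S.card ≤ 2 * Fintype.card V ∧
      (2 * Fintype.card V : ℝ) / 3 * cut w S (leaves t \ S) ≤ cost w t := by
  induction t with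
  | leaf v =>
    exfalso
    have : (leaves (HCTree.leaf v)).card = 1 := by rw [leaves_leaf']; simp
    omega
  | node l r ihl ihr =>
    obtain ⟨hl, hr, hdisj⟩ := nodup_node' hnd
    set n := Fintype.card V with hndef
    have hcard : (leaves (HCTree.node l r)).card = (leaves l).card + (leaves r).card := by
      rw [leaves_node', Finset.card_union_of_disjoint hdisj]
    have hcost : cost w (HCTree.node l r)
        = ((leaves (HCTree.node l r)).card : ℝ) * cut w (leaves l) (leaves r)
          + cost w l + cost w r := rfl
    have hcut := cut_nonneg' w hw (leaves l) (leaves r)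
    have hcl := cost_nonneg' w hw l
    have hcr := cost_nonneg' w hw r
    have h23 : (2 * n : ℝ) / 3 ≤ ((leaves (HCTree.node l r)).card : ℝ) := by
      rw [div_le_iff₀ (by norm_num : (0:ℝ) < 3)]
      exact_mod_cast (by omega : 2 * n ≤ (leaves (HCTree.node l r)).card * 3)
    by_cases hA : 2 * n ≤ 3 * (leaves l).card
    · obtain ⟨S, hsub, h1, h2, h3⟩ := ihl hl hA
      refine ⟨S, ?_, h1, h2, ?_⟩
      · rw [leaves_node']; exact hsub.trans Finset.subset_union_left
      · have hSr : Disjoint (leaves r) S :=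
          (hdisj.symm.mono_right hsub)
        have hsplit : leaves (HCTree.node l r) \ S = (leaves l \ S) ∪ leaves r := by
          rw [leaves_node', Finset.union_sdiff_distrib,
            Finset.sdiff_eq_self_of_disjoint hSr]
        have hd2 : Disjoint (leaves l \ S) (leaves r) :=
          hdisj.mono_left (Finset.sdiff_subset)
        rw [hsplit, cut_union_right' w hd2]
        have h4 : cut w S (leaves r) ≤ cut w (leaves l) (leaves r) :=
          cut_mono' w hw hsub (Finset.Subset.refl _)
        have h5 : (2 * n : ℝ) / 3 * cut w S (leaves r)
            ≤ ((leaves (HCTree.node l r)).card : ℝ) * cut w (leaves l) (leaves r) :=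
          mul_le_mul h23 h4 (cut_nonneg' w hw _ _) (by positivity)
        rw [mul_add]
        linarith
    · by_cases hB : 2 * n ≤ 3 * (leaves r).card
      · obtain ⟨S, hsub, h1, h2, h3⟩ := ihr hr hB
        refine ⟨S, ?_, h1, h2, ?_⟩
        · rw [leaves_node']; exact hsub.trans Finset.subset_union_right
        · have hSl : Disjoint (leaves l) S := (hdisj.mono_right hsub)
          have hsplit : leaves (HCTree.node l r) \ S = leaves l ∪ (leaves r \ S) := by
            rw [leaves_node', Finset.union_sdiff_distrib,
              Finset.sdiff_eq_self_of_disjoint hSl]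
          have hd2 : Disjoint (leaves l) (leaves r \ S) :=
            hdisj.mono_right (Finset.sdiff_subset)
          rw [hsplit, cut_union_right' w hd2]
          have h4 : cut w S (leaves l) ≤ cut w (leaves l) (leaves r) := by
            rw [cut_comm' w hsymm S (leaves l)]
            exact cut_mono' w hw (Finset.Subset.refl _) hsub
          have h5 : (2 * n : ℝ) / 3 * cut w S (leaves l)
              ≤ ((leaves (HCTree.node l r)).card : ℝ) * cut w (leaves l) (leaves r) :=
            mul_le_mul h23 h4 (cut_nonneg' w hw _ _) (by positivity)
          rw [mul_add]
          linarith
      · -- both children small: take larger child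
        by_cases hlr : (leaves r).card ≤ (leaves l).card
        · refine ⟨leaves l, ?_, by omega, by omega, ?_⟩
          · rw [leaves_node']; exact Finset.subset_union_left
          · have hsplit : leaves (HCTree.node l r) \ leaves l = leaves r := by
              rw [leaves_node', Finset.union_sdiff_distrib, Finset.sdiff_self,
                Finset.sdiff_eq_self_of_disjoint hdisj.symm, Finset.empty_union]
            rw [hsplit]
            have := mul_le_mul_of_nonneg_right h23 hcut
            linarith
        · refine ⟨leaves r, ?_, by omega, by omega, ?_⟩
          · rw [leaves_node']; exact Finset.subset_union_right
          · have hsplit : leaves (HCTree.node l r) \ leaves r = leaves l := by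
              rw [leaves_node', Finset.union_sdiff_distrib, Finset.sdiff_self,
                Finset.sdiff_eq_self_of_disjoint hdisj, Finset.union_empty]
            rw [hsplit, cut_comm' w hsymm]
            have := mul_le_mul_of_nonneg_right h23 hcut
            linarith

end Aux

section MainAux
open HCTree
variable {V : Type} [Fintype V] [DecidableEq V]

lemma one_le_leafList_length (t : HCTree V) : 1 ≤ t.leafList.length := by
  induction t with
  | leaf v => simp [HCTree.leafList]
  | node l r ihl ihr => simp only [HCTree.leafList, List.length_append]; omega

end MainAux


open HCTree in
/-- If `G` has `d_max/d_min = O(1)` and conductance `Φ_G = Ω(1)`, then every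
HC tree of `G` is an `O(1)`-approximation of the optimal Dasgupta cost; concretely,
`cost_G(T) ≤ (9/(4Φ_G)) · (d_max/d_min) · OPT_G`, a constant depending only on `Φ_G`
and `d_max/d_min`. -/
theorem every_tree_constant_approx {V : Type} [Fintype V] [DecidableEq V] [Nonempty V]
    (w : V → V → ℝ) (hw : ∀ u v, 0 ≤ w u v) (hsymm : ∀ u v, w u v = w v u)
    (Φ : ℝ) (hΦ0 : 0 < Φ)
    (hΦ : ∀ S : Finset V, S.Nonempty → vol w S ≤ vol w (Finset.univ : Finset V) / 2 →
      Φ * vol w S ≤ cut w S Sᶜ)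
    (κ : ℝ)
    (hκ : Finset.univ.sup' Finset.univ_nonempty (deg w)
            ≤ κ * Finset.univ.inf' Finset.univ_nonempty (deg w))
    (Tstar : HCTree V) (hTstar : isHC Tstar)
    (hopt : ∀ t : HCTree V, isHC t → cost w Tstar ≤ cost w t)
    (T : HCTree V) (hT : isHC T) :
    cost w T ≤ 9 / (4 * Φ) *
        ((Finset.univ.sup' Finset.univ_nonempty (deg w))
          / (Finset.univ.inf' Finset.univ_nonempty (deg w)))
        * cost w Tstar := by
  set M := Finset.univ.sup' Finset.univ_nonempty (deg w) with hMdef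
  set m := Finset.univ.inf' Finset.univ_nonempty (deg w) with hmdef
  set n := Fintype.card V with hndef
  have hdeg_nonneg : ∀ u : V, 0 ≤ deg w u :=
    fun u => Finset.sum_nonneg fun v _ => hw u v
  have hm_nonneg : 0 ≤ m :=
    Finset.le_inf' _ _ fun u _ => hdeg_nonneg u
  have hdeg_le_M : ∀ u : V, deg w u ≤ M :=
    fun u => Finset.le_sup' (deg w) (Finset.mem_univ u)
  have hm_le_deg : ∀ u : V, m ≤ deg w u :=
    fun u => Finset.inf'_le (deg w) (Finset.mem_univ u)
  have hM_nonneg : 0 ≤ M := le_trans hm_nonneg (le_trans (hm_le_deg (Classical.arbitrary V)) (hdeg_le_M _))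
  have hcostT_nonneg := cost_nonneg' w hw T
  have hcostTs_nonneg := cost_nonneg' w hw Tstar
  -- pair-sum over univ equals vol univ
  have hpair : ∑ u ∈ (Finset.univ : Finset V), ∑ v ∈ (Finset.univ : Finset V), w u v
      = vol w Finset.univ := rfl
  have hvol_le : vol w (Finset.univ : Finset V) ≤ (n : ℝ) * M := by
    unfold HCTree.vol
    calc ∑ u, deg w u ≤ ∑ _u : V, M := Finset.sum_le_sum fun u _ => hdeg_le_M u
      _ = (n : ℝ) * M := by rw [Finset.sum_const, Finset.card_univ]; simp [hndef, mul_comm]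
  have hupper : cost w T ≤ (n : ℝ) / 2 * vol w (Finset.univ : Finset V) := by
    have := cost_le_pair' w hw hsymm T hT.1
    rwa [hT.2, hpair] at this
  rcases eq_or_lt_of_le hm_nonneg with hm0 | hmpos
  · -- m = 0: all degrees are 0
    have hM0 : M = 0 := le_antisymm (by rw [← hm0] at hκ; simpa using hκ) hM_nonneg
    have hvol0 : vol w (Finset.univ : Finset V) ≤ 0 := by
      rw [hM0] at hvol_le; simpa using hvol_le
    have : cost w T ≤ 0 := le_trans hupper (by nlinarith [Fintype.card_pos (α := V)])
    rw [← hm0, div_zero, mul_zero, zero_mul]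
    linarith
  · -- m > 0
    by_cases hn2 : 2 ≤ n
    · -- main case
      obtain ⟨S, hSsub, h1, h2, h3⟩ := cost_lower' w hw hsymm hn2 Tstar hTstar.1
        (by rw [hTstar.2, Finset.card_univ, ← hndef]; omega)
      rw [hTstar.2] at h3
      rw [← Finset.compl_eq_univ_sdiff] at h3
      have hSne : S.Nonempty := Finset.card_pos.mp (by omega)
      have hScne : Sᶜ.Nonempty := by
        apply Finset.card_pos.mp
        have := Finset.card_compl S
        have hSle : S.card ≤ n := Finset.card_le_univ S
        omega
      have hvolsum : vol w S + vol w Sᶜ = vol w (Finset.univ : Finset V) :=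
        Finset.sum_add_sum_compl S (deg w)
      have hvolS : (S.card : ℝ) * m ≤ vol w S := by
        have := Finset.card_nsmul_le_sum S (deg w) m fun u _ => hm_le_deg u
        simpa [nsmul_eq_mul, HCTree.vol] using this
      have hvolSc : ((Sᶜ : Finset V).card : ℝ) * m ≤ vol w Sᶜ := by
        have := Finset.card_nsmul_le_sum Sᶜ (deg w) m fun u _ => hm_le_deg u
        simpa [nsmul_eq_mul, HCTree.vol] using this
      have hScard : (n : ℝ) / 3 ≤ (S.card : ℝ) := by
        rw [div_le_iff₀ (by norm_num : (0:ℝ) < 3)]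
        exact_mod_cast (by omega : n ≤ S.card * 3)
      have hSccard : (n : ℝ) / 3 ≤ ((Sᶜ : Finset V).card : ℝ) := by
        rw [div_le_iff₀ (by norm_num : (0:ℝ) < 3)]
        have hc := Finset.card_compl S
        have hSle : S.card ≤ n := Finset.card_le_univ S
        exact_mod_cast (by omega : n ≤ (Sᶜ : Finset V).card * 3)
      have hcutlow : Φ * (m * ((n : ℝ) / 3)) ≤ cut w S Sᶜ := by
        by_cases hvS : vol w S ≤ vol w (Finset.univ : Finset V) / 2
        · have hc := hΦ S hSne hvS
          have hv : m * ((n:ℝ)/3) ≤ vol w S := by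
            calc m * ((n:ℝ)/3) = (n:ℝ)/3 * m := by ring
              _ ≤ (S.card : ℝ) * m := mul_le_mul_of_nonneg_right hScard hm_nonneg
              _ ≤ vol w S := hvolS
          nlinarith
        · have hvSc : vol w Sᶜ ≤ vol w (Finset.univ : Finset V) / 2 := by linarith
          have hc := hΦ Sᶜ hScne hvSc
          rw [compl_compl, cut_comm' w hsymm Sᶜ S] at hc
          have hv : m * ((n:ℝ)/3) ≤ vol w Sᶜ := by
            calc m * ((n:ℝ)/3) = (n:ℝ)/3 * m := by ring
              _ ≤ ((Sᶜ : Finset V).card : ℝ) * m :=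
                  mul_le_mul_of_nonneg_right hSccard hm_nonneg
              _ ≤ vol w Sᶜ := hvolSc
          nlinarith
      have hlow : 2 * (n:ℝ) / 3 * (Φ * (m * ((n : ℝ) / 3))) ≤ cost w Tstar :=
        le_trans (mul_le_mul_of_nonneg_left hcutlow (by positivity)) h3
      have hC : (0:ℝ) ≤ 9 / (4 * Φ) * (M / m) := by positivity
      have heq : 9 / (4 * Φ) * (M / m) * (2 * (n:ℝ) / 3 * (Φ * (m * ((n : ℝ) / 3))))
          = (n:ℝ) * (n:ℝ) * M / 2 := by
        field_simp
        ring
      have hkey := mul_le_mul_of_nonneg_left hlow hC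
      rw [heq] at hkey
      have hn0 : (0:ℝ) ≤ (n:ℝ) := Nat.cast_nonneg n
      have hstep : (n:ℝ) / 2 * vol w (Finset.univ : Finset V) ≤ (n:ℝ) * (n:ℝ) * M / 2 := by
        nlinarith
      linarith
    · -- n = 1 : T must be a single leaf
      have hn1 : n = 1 := by have := Fintype.card_pos (α := V); omega
      have hlen : T.leafList.length = 1 := by
        rw [← List.toFinset_card_of_nodup hT.1]
        show (leaves T).card = 1
        rw [hT.2, Finset.card_univ, ← hndef, hn1]
      have hT0 : cost w T = 0 := by
        cases T with
        | leaf v => rfl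
        | node l r =>
          exfalso
          have h1 := one_le_leafList_length l
          have h2 := one_le_leafList_length r
          simp only [HCTree.leafList, List.length_append] at hlen
          omega
      rw [hT0]
      have : 0 ≤ 9 / (4 * Φ) * (M / m) := by positivity
      positivity
end

section
/- Let G have conductance Φ_G and let T be an HC tree with dense branch (A_0, ..., A_k), where B_i is the sibling of A_i for 1 ≤ i ≤ k. Then cost_G(T) ≥ (Φ_G/2) · Σ_{i=1}^{k} |A_{i-1}| · vol(B_i). -/
open Finset

namespace HCTree

variable {V : Type} [Fintype V] [DecidableEq V]

/-- `DenseBranch w t k A B` says that `(A 0, …, A k)` is the dense branch of the HC tree `t`,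
with `B (i+1)` the sibling of `A (i+1)`: `A 0` is the root, each `A (i+1)` is the child of
`A i` of higher volume, every node on the branch has volume greater than `vol(G)/2`,
and both children of the final node `A k` have volume at most `vol(G)/2`. -/
def DenseBranch (w : V → V → ℝ) (t : HCTree V) (k : ℕ)
    (A B : ℕ → HCTree V) : Prop :=
  A 0 = t ∧
  (∀ i < k,
      (A i = HCTree.node (A (i+1)) (B (i+1)) ∨ A i = HCTree.node (B (i+1)) (A (i+1))) ∧
      vol w (leaves (B (i+1))) ≤ vol w (leaves (A (i+1)))) ∧
  (∀ i ≤ k, vol w (Finset.univ : Finset V) / 2 < vol w (leaves (A i))) ∧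
  (∃ l r, A k = HCTree.node l r ∧
      vol w (leaves l) ≤ vol w (Finset.univ : Finset V) / 2 ∧
      vol w (leaves r) ≤ vol w (Finset.univ : Finset V) / 2)

end HCTree

namespace HCTree
set_option linter.unusedSectionVars false
variable {V : Type} [Fintype V] [DecidableEq V]

lemma leaves_node (l r : HCTree V) : leaves (node l r) = leaves l ∪ leaves r := by
  simp [leaves, leafList]

lemma leaves_nonempty (t : HCTree V) : (leaves t).Nonempty := by
  induction t with
  | leaf v => simp [leaves, leafList]
  | node l r ihl ihr => rw [leaves_node]; exact ihl.mono subset_union_left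

lemma nodup_node {l r : HCTree V} (h : (node l r).leafList.Nodup) :
    l.leafList.Nodup ∧ r.leafList.Nodup ∧ Disjoint (leaves l) (leaves r) := by
  rw [leafList, List.nodup_append] at h
  refine ⟨h.1, h.2.1, ?_⟩
  rw [leaves, leaves, List.disjoint_toFinset_iff_disjoint]
  intro a ha hb
  exact h.2.2 a ha a hb rfl

lemma cut_nonneg {w : V → V → ℝ} (hw : ∀ u v, 0 ≤ w u v) (S T : Finset V) :
    0 ≤ cut w S T :=
  Finset.sum_nonneg fun u _ => Finset.sum_nonneg fun v _ => hw u v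

lemma cut_symm {w : V → V → ℝ} (hsymm : ∀ u v, w u v = w v u) (S T : Finset V) :
    cut w S T = cut w T S := by
  rw [cut, cut, Finset.sum_comm]
  exact Finset.sum_congr rfl fun u _ => Finset.sum_congr rfl fun v _ => hsymm v u

lemma cut_union_right {w : V → V → ℝ} (S : Finset V) {T₁ T₂ : Finset V}
    (h : Disjoint T₁ T₂) : cut w S (T₁ ∪ T₂) = cut w S T₁ + cut w S T₂ := by
  simp [cut, Finset.sum_union h, Finset.sum_add_distrib]

lemma vol_eq_cut (w : V → V → ℝ) (S : Finset V) : vol w S = cut w S univ := rfl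

lemma cut_univ_right {w : V → V → ℝ} (S T : Finset V) :
    cut w S univ = cut w S T + cut w S Tᶜ := by
  rw [← cut_union_right S disjoint_compl_right, Finset.union_compl]

lemma cost_nonneg {w : V → V → ℝ} (hw : ∀ u v, 0 ≤ w u v) (t : HCTree V) :
    0 ≤ cost w t := by
  induction t with
  | leaf v => simp [cost]
  | node l r ihl ihr =>
    rw [cost]
    have := cut_nonneg hw (leaves l) (leaves r)
    positivity

lemma vol_mono {w : V → V → ℝ} (hw : ∀ u v, 0 ≤ w u v) {S T : Finset V} (h : S ⊆ T) :
    vol w S ≤ vol w T :=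
  Finset.sum_le_sum_of_subset_of_nonneg h fun u _ _ =>
    Finset.sum_nonneg fun v _ => hw u v

end HCTree

open HCTree in
/-- If `G` has conductance `Φ_G` and `T` is an HC tree with dense branch
`(A_0, …, A_k)`, where `B_i` is the sibling of `A_i`, then
`cost_G(T) ≥ (Φ_G/2) · ∑_{i=1}^{k} |A_{i-1}| · vol(B_i)`. -/
theorem cost_lower_bound_dense_branch {V : Type} [Fintype V] [DecidableEq V]
    (w : V → V → ℝ) (hw : ∀ u v, 0 ≤ w u v) (hsymm : ∀ u v, w u v = w v u)
    (Φ : ℝ) (hΦ0 : 0 ≤ Φ)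
    (hΦ : ∀ S : Finset V, S.Nonempty → vol w S ≤ vol w (Finset.univ : Finset V) / 2 →
      Φ * vol w S ≤ cut w S Sᶜ)
    (t : HCTree V) (ht : isHC t) (k : ℕ) (A B : ℕ → HCTree V)
    (hdb : DenseBranch w t k A B) :
    Φ / 2 * ∑ i ∈ Finset.range k,
        ((leaves (A i)).card : ℝ) * vol w (leaves (B (i+1)))
      ≤ cost w t := by
  obtain ⟨hA0, hstep, hvolA, -⟩ := hdb
  have hnodup : ∀ i ≤ k, (A i).leafList.Nodup := by
    intro i
    induction i with
    | zero => intro _; rw [hA0]; exact ht.1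
    | succ n ih =>
      intro h
      have hn := ih (by omega)
      rcases (hstep n (by omega)).1 with he | he
      · exact (nodup_node (he ▸ hn)).1
      · exact (nodup_node (he ▸ hn)).2.1
  have hsplit : ∀ i < k, Disjoint (leaves (A (i+1))) (leaves (B (i+1))) ∧
      leaves (A i) = leaves (A (i+1)) ∪ leaves (B (i+1)) := by
    intro i hi
    have hn := hnodup i (le_of_lt hi)
    rcases (hstep i hi).1 with he | he
    · have h2 := nodup_node (he ▸ hn)
      exact ⟨h2.2.2, by rw [he, leaves_node]⟩
    · have h2 := nodup_node (he ▸ hn)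
      exact ⟨h2.2.2.symm, by rw [he, leaves_node, Finset.union_comm]⟩
  have htel : ∀ (S : Finset V) (a b : ℕ), a ≤ b → b ≤ k →
      cut w S (leaves (A a)) =
        cut w S (leaves (A b)) + ∑ j ∈ Finset.Ico a b, cut w S (leaves (B (j+1))) := by
    intro S a b hab hbk
    induction b, hab using Nat.le_induction with
    | base => simp
    | succ n hn ih =>
      have hnk : n < k := by omega
      rw [ih (by omega), Finset.sum_Ico_succ_top hn, (hsplit n hnk).2,
        cut_union_right S (hsplit n hnk).1]
      ring
  have hvolsplit : ∀ i < k, vol w (leaves (A i)) =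
      vol w (leaves (A (i+1))) + vol w (leaves (B (i+1))) := by
    intro i hi
    rw [(hsplit i hi).2, vol, Finset.sum_union (hsplit i hi).1]; rfl
  have hkey : ∀ i < k, Φ * vol w (leaves (B (i+1))) ≤
      cut w (leaves (B (i+1))) (leaves (A (i+1))) +
        ∑ j ∈ Finset.range i, cut w (leaves (B (i+1))) (leaves (B (j+1))) := by
    intro i hi
    set S := leaves (B (i+1)) with hS
    have hsub : vol w S ≤ vol w (univ : Finset V) / 2 := by
      have h1 := hvolsplit i hi
      have h2 : vol w (leaves (A i)) ≤ vol w (univ : Finset V) :=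
        vol_mono hw (Finset.subset_univ _)
      have h3 := hvolA (i+1) (by omega)
      linarith
    have h4 := hΦ S (leaves_nonempty _) hsub
    have h5 := cut_univ_right (w := w) S S
    have h6 := htel S 0 (i+1) (by omega) (by omega)
    rw [show leaves (A 0) = univ by rw [hA0]; exact ht.2] at h6
    rw [← Finset.range_eq_Ico, Finset.sum_range_succ] at h6
    have h7 : cut w S Sᶜ = cut w S (leaves (A (i+1))) +
        ∑ j ∈ Finset.range i, cut w S (leaves (B (j+1))) := by
      rw [vol_eq_cut] at *
      linarith
    linarith
  have hbound2 : ∀ j < k,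
      ∑ i ∈ Finset.Ico (j+1) k, cut w (leaves (B (j+1))) (leaves (B (i+1))) ≤
        cut w (leaves (B (j+1))) (leaves (A (j+1))) := by
    intro j hj
    have h1 := htel (leaves (B (j+1))) (j+1) k (by omega) le_rfl
    have h0 := cut_nonneg hw (leaves (B (j+1))) (leaves (A k))
    linarith
  have hAsub : ∀ j i, j ≤ i → i ≤ k → leaves (A i) ⊆ leaves (A j) := by
    intro j i hji hik
    induction i, hji using Nat.le_induction with
    | base => exact subset_rfl
    | succ n hn ih =>
      refine subset_trans ?_ (ih (by omega))
      rw [(hsplit n (by omega)).2]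
      exact Finset.subset_union_left
  have hchain : ∀ j ≤ k,
      (∑ i ∈ Finset.range j, ((leaves (A i)).card : ℝ) *
        cut w (leaves (A (i+1))) (leaves (B (i+1)))) + cost w (A j) ≤ cost w (A 0) := by
    intro j
    induction j with
    | zero => intro _; simp
    | succ n ih =>
      intro h
      have hn := ih (by omega)
      have hc : cost w (A n) = ((leaves (A n)).card : ℝ) *
          cut w (leaves (A (n+1))) (leaves (B (n+1))) + cost w (A (n+1)) +
          cost w (B (n+1)) := by
        rcases (hstep n (by omega)).1 with he | he
        · conv_lhs => rw [he]
          rw [cost, ← he]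
        · conv_lhs => rw [he]
          rw [cost, ← he, cut_symm hsymm]
          ring
      have h0 := cost_nonneg hw (B (n+1))
      rw [Finset.sum_range_succ]
      linarith
  -- main combination
  set a : ℕ → ℝ := fun i => ((leaves (A i)).card : ℝ) with ha
  have ha0 : ∀ i, 0 ≤ a i := fun i => Nat.cast_nonneg _
  have hamono : ∀ j i, j ≤ i → i ≤ k → a i ≤ a j := fun j i hji hik =>
    Nat.cast_le.2 (Finset.card_le_card (hAsub j i hji hik))
  have stepA : ∑ i ∈ Finset.range k, a i * (Φ * vol w (leaves (B (i+1)))) ≤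
      (∑ i ∈ Finset.range k, a i * cut w (leaves (B (i+1))) (leaves (A (i+1)))) +
      ∑ i ∈ Finset.range k, ∑ j ∈ Finset.range i,
        a i * cut w (leaves (B (i+1))) (leaves (B (j+1))) := by
    rw [← Finset.sum_add_distrib]
    refine Finset.sum_le_sum fun i hi => ?_
    have hik := Finset.mem_range.1 hi
    have := mul_le_mul_of_nonneg_left (hkey i hik) (ha0 i)
    rw [mul_add, Finset.mul_sum] at this
    exact this
  have stepB : ∑ i ∈ Finset.range k, ∑ j ∈ Finset.range i,
        a i * cut w (leaves (B (i+1))) (leaves (B (j+1))) =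
      ∑ j ∈ Finset.range k, ∑ i ∈ Finset.Ico (j+1) k,
        a i * cut w (leaves (B (i+1))) (leaves (B (j+1))) := by
    refine Finset.sum_comm' ?_
    intro i j
    simp only [Finset.mem_range, Finset.mem_Ico]
    omega
  have stepC : ∀ j < k, ∑ i ∈ Finset.Ico (j+1) k,
        a i * cut w (leaves (B (i+1))) (leaves (B (j+1))) ≤
      a j * cut w (leaves (B (j+1))) (leaves (A (j+1))) := by
    intro j hj
    have h1 : ∑ i ∈ Finset.Ico (j+1) k,
        a i * cut w (leaves (B (i+1))) (leaves (B (j+1))) ≤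
        ∑ i ∈ Finset.Ico (j+1) k,
          a j * cut w (leaves (B (j+1))) (leaves (B (i+1))) := by
      refine Finset.sum_le_sum fun i hi => ?_
      have hik := Finset.mem_Ico.1 hi
      rw [cut_symm hsymm]
      exact mul_le_mul_of_nonneg_right (hamono j i (by omega) (by omega))
        (cut_nonneg hw _ _)
    rw [← Finset.mul_sum] at h1
    exact h1.trans (mul_le_mul_of_nonneg_left (hbound2 j hj) (ha0 j))
  have stepC' : ∑ j ∈ Finset.range k, ∑ i ∈ Finset.Ico (j+1) k,
        a i * cut w (leaves (B (i+1))) (leaves (B (j+1))) ≤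
      ∑ j ∈ Finset.range k, a j * cut w (leaves (B (j+1))) (leaves (A (j+1))) :=
    Finset.sum_le_sum fun j hj => stepC j (Finset.mem_range.1 hj)
  have hcost : ∑ i ∈ Finset.range k,
      a i * cut w (leaves (B (i+1))) (leaves (A (i+1))) ≤ cost w t := by
    have h1 := hchain k le_rfl
    have h2 := cost_nonneg hw (A k)
    have h3 : ∑ i ∈ Finset.range k, a i * cut w (leaves (B (i+1))) (leaves (A (i+1))) =
        ∑ i ∈ Finset.range k, a i * cut w (leaves (A (i+1))) (leaves (B (i+1))) :=
      Finset.sum_congr rfl fun i _ => by rw [cut_symm hsymm]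
    rw [h3, ← hA0]
    linarith
  have hfin : ∑ i ∈ Finset.range k, a i * (Φ * vol w (leaves (B (i+1)))) =
      Φ * ∑ i ∈ Finset.range k, a i * vol w (leaves (B (i+1))) := by
    rw [Finset.mul_sum]
    exact Finset.sum_congr rfl fun i _ => by ring
  rw [div_mul_eq_mul_div, mul_comm, ← div_mul_eq_mul_div]
  have : Φ * ∑ i ∈ Finset.range k, a i * vol w (leaves (B (i+1))) ≤ 2 * cost w t := by
    linarith
  linarith
end

section
/- In a dyadic degree-ordered HC tree, for every interval (2^{s-1}, 2^s] there are at most 3 critical nodes N with |N| ∈ (2^{s-1}, 2^s]. Consequently, if N is a critical node of a tree T_i and the critical nodes of all ℓ ≤ k trees of size at most |N| are merged into a single subtree whose parent is parent_{T_PM}(N), then |parent_{T_PM}(N)| ≤ 12k·|N| ≤ 6k·|parent_{T_i}(N)|. -/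
open Finset

lemma chain_sum (g : ℕ → ℕ) : ∀ n a, (∀ j, a ≤ j → j < a + n → g j = 2 * g (j+1)) →
    ∑ j ∈ Finset.Icc a (a+n), g j ≤ 2 * g a := by
  intro n
  induction n with
  | zero => intro a _; simp; omega
  | succ n ih =>
    intro a h
    have hins : Finset.Icc a (a+(n+1)) = insert a (Finset.Icc (a+1) (a+1+n)) := by
      ext x; simp [Finset.mem_Icc]; omega
    rw [hins, Finset.sum_insert (by simp)]
    have h1 := ih (a+1) (fun j hj hj' => h j (by omega) (by omega))
    have ha := h a (le_refl a) (by omega)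
    omega

lemma chain_pow (f : ℕ → ℕ) (r : ℕ) (hd : ∀ j, 2 ≤ j → j ≤ r → f j = 2 * f (j+1)) :
    ∀ n j, 2 ≤ j → j + n ≤ r + 1 → f j = 2^n * f (j+n) := by
  intro n
  induction n with
  | zero => simp
  | succ n ih =>
    intro j hj hjn
    have h1 : f j = 2 * f (j+1) := hd j hj (by omega)
    have h2 := ih (j+1) (by omega) (by omega)
    have h3 : j + 1 + n = j + (n+1) := by omega
    rw [h3] at h2
    rw [h1, h2, pow_succ]; ring

lemma tree_sum (f : ℕ → ℕ) (r C : ℕ) (hd : ∀ j, 2 ≤ j → j ≤ r → f j = 2 * f (j+1)) :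
    ∑ j ∈ (Finset.Icc 1 (r+2)).filter (fun j => f j ≤ C), f j ≤ 4 * C := by
  have hmid : ∑ j ∈ (Finset.Icc 2 (r+1)).filter (fun j => f j ≤ C), f j ≤ 2 * C := by
    set S := (Finset.Icc 2 (r+1)).filter (fun j => f j ≤ C) with hS
    rcases S.eq_empty_or_nonempty with h | h
    · simp [h]
    · set a := S.min' h with ha
      have haS : a ∈ S := S.min'_mem h
      have haI := (Finset.mem_filter.mp haS).1
      have hafC : f a ≤ C := (Finset.mem_filter.mp haS).2
      have ha2 := Finset.mem_Icc.mp haI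
      have hsub : S ⊆ Finset.Icc a (r+1) := by
        intro x hx
        have h1 := S.min'_le x hx
        have hxI := Finset.mem_Icc.mp (Finset.mem_filter.mp hx).1
        exact Finset.mem_Icc.mpr ⟨h1, hxI.2⟩
      calc ∑ j ∈ S, f j ≤ ∑ j ∈ Finset.Icc a (r+1), f j :=
            Finset.sum_le_sum_of_subset hsub
        _ ≤ 2 * f a := by
            have he : r + 1 = a + (r + 1 - a) := by omega
            rw [he]
            exact chain_sum f (r+1-a) a (fun j hj hj' => hd j (by omega) (by omega))
        _ ≤ 2 * C := by omega
  have hset : Finset.Icc 1 (r+2) = insert 1 (insert (r+2) (Finset.Icc 2 (r+1))) := by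
    ext x; simp [Finset.mem_Icc]; omega
  have hn1 : (1:ℕ) ∉ insert (r+2) ((Finset.Icc 2 (r+1)).filter (fun j => f j ≤ C)) := by
    simp [Finset.mem_Icc]
  have hn1' : (1:ℕ) ∉ (Finset.Icc 2 (r+1)).filter (fun j => f j ≤ C) := by
    simp [Finset.mem_Icc]
  have hn2 : r+2 ∉ (Finset.Icc 2 (r+1)).filter (fun j => f j ≤ C) := by
    simp [Finset.mem_Icc]
  rw [hset, Finset.filter_insert, Finset.filter_insert]
  split_ifs with h1 h2 h2
  · rw [Finset.sum_insert (by simpa using hn1), Finset.sum_insert hn2]; omega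
  · rw [Finset.sum_insert hn1']; omega
  · rw [Finset.sum_insert hn2]; omega
  · omega

lemma chain_pow' (f : ℕ → ℕ) (r : ℕ) (hd : ∀ j, 2 ≤ j → j ≤ r → f j = 2 * f (j+1)) :
    ∀ n j, 2 ≤ j → j + n ≤ r + 1 → f j = 2^n * f (j+n) := by
  intro n
  induction n with
  | zero => simp
  | succ n ih =>
    intro j hj hjn
    have h1 : f j = 2 * f (j+1) := hd j hj (by omega)
    have h2 := ih (j+1) (by omega) (by omega)
    have h3 : j + 1 + n = j + (n+1) := by omega
    rw [h3] at h2
    rw [h1, h2, pow_succ]; ring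

lemma tree_card (f : ℕ → ℕ) (r s : ℕ) (hd : ∀ j, 2 ≤ j → j ≤ r → f j = 2 * f (j+1)) :
    ((Finset.Icc 1 (r+2)).filter (fun j => 2^s < 2 * f j ∧ f j ≤ 2^s)).card ≤ 3 := by
  have hone : ((Finset.Icc 2 (r+1)).filter (fun j => 2^s < 2 * f j ∧ f j ≤ 2^s)).card ≤ 1 := by
    apply Finset.card_le_one.mpr
    intro a ha b hb
    have haI := Finset.mem_Icc.mp (Finset.mem_filter.mp ha).1
    have hbI := Finset.mem_Icc.mp (Finset.mem_filter.mp hb).1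
    have hPa := (Finset.mem_filter.mp ha).2
    have hPb := (Finset.mem_filter.mp hb).2
    have key : ∀ x y : ℕ, 2 ≤ x → y ≤ r + 1 → x < y →
        (2^s < 2 * f x ∧ f x ≤ 2^s) → (2^s < 2 * f y ∧ f y ≤ 2^s) → False := by
      intro x y hx hy hxy hPx hPy
      have hc := chain_pow' f r hd (y - x) x (by omega) (by omega)
      have he : x + (y - x) = y := by omega
      rw [he] at hc
      have h2 : 2 * f y ≤ 2^(y-x) * f y := by
        apply Nat.mul_le_mul_right
        calc (2:ℕ) = 2^1 := rfl
          _ ≤ 2^(y-x) := Nat.pow_le_pow_right (by norm_num) (by omega)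
      have hfa : 2 * f y ≤ f x := by rw [hc]; exact h2
      omega
    rcases Nat.lt_trichotomy a b with h | h | h
    · exact absurd (key a b (by omega) (by omega) h hPa hPb) (by simp)
    · exact h
    · exact absurd (key b a (by omega) (by omega) h hPb hPa) (by simp)
  have hsub : (Finset.Icc 1 (r+2)).filter (fun j => 2^s < 2 * f j ∧ f j ≤ 2^s) ⊆
      insert 1 (insert (r+2) ((Finset.Icc 2 (r+1)).filter (fun j => 2^s < 2 * f j ∧ f j ≤ 2^s))) := by
    intro x hx
    have hm := Finset.mem_filter.mp hx
    have hxI := Finset.mem_Icc.mp hm.1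
    rcases eq_or_ne x 1 with h | h
    · exact Finset.mem_insert.mpr (Or.inl h)
    rcases eq_or_ne x (r+2) with h' | h'
    · exact Finset.mem_insert.mpr (Or.inr (Finset.mem_insert.mpr (Or.inl h')))
    · exact Finset.mem_insert.mpr (Or.inr (Finset.mem_insert.mpr (Or.inr
        (Finset.mem_filter.mpr ⟨Finset.mem_Icc.mpr ⟨by omega, by omega⟩, hm.2⟩))))
  calc ((Finset.Icc 1 (r+2)).filter _).card
      ≤ (insert 1 (insert (r+2) ((Finset.Icc 2 (r+1)).filter
          (fun j => 2^s < 2 * f j ∧ f j ≤ 2^s)))).card := Finset.card_le_card hsub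
    _ ≤ (insert (r+2) ((Finset.Icc 2 (r+1)).filter
          (fun j => 2^s < 2 * f j ∧ f j ≤ 2^s))).card + 1 := Finset.card_insert_le _ _
    _ ≤ ((Finset.Icc 2 (r+1)).filter (fun j => 2^s < 2 * f j ∧ f j ≤ 2^s)).card + 1 + 1 := by
          have := Finset.card_insert_le (r+2) ((Finset.Icc 2 (r+1)).filter
            (fun j => 2^s < 2 * f j ∧ f j ≤ 2^s))
          omega
    _ ≤ 3 := by omega


/-- In the dyadic degree-ordered HC trees `T_1, …, T_ℓ` (with `ℓ ≤ k`),
the critical nodes of `T_i` are `B_1, …, B_{r_i+1}, A_{r_i+1}`; we record their sizes as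
`crit i j` for `j ∈ [1, r_i + 2]` (index `r_i + 2` standing for `A_{r_i+1}`). By construction
`|B_j| = 2·|B_{j+1}|` for `2 ≤ j ≤ r_i`, `|A_{r_i+1}| = |B_{r_i+1}|`, every critical node `N`
satisfies `2·|N| ≤ |parent_{T_i}(N)|`, and in the merged tree the parent of `N` consists of all
critical nodes of size at most `|N|`.  Then:
(1) every dyadic interval `(2^{s-1}, 2^s]` contains at most `3` critical node sizes of each
tree, and (2) for every critical node `N`,
`|parent_{T_PM}(N)| ≤ 12·k·|N| ≤ 6·k·|parent_{T_i}(N)|`. -/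
theorem parent_size_pruned_nodes
    (k ℓ : ℕ) (hℓ : ℓ ≤ k)
    (r : Fin ℓ → ℕ) (crit par : Fin ℓ → ℕ → ℕ)
    (hpos : ∀ i : Fin ℓ, ∀ j ∈ Finset.Icc 1 (r i + 2), 1 ≤ crit i j)
    (hdouble : ∀ i : Fin ℓ, ∀ j : ℕ, 2 ≤ j → j ≤ r i → crit i j = 2 * crit i (j + 1))
    (hlast : ∀ i : Fin ℓ, crit i (r i + 2) = crit i (r i + 1))
    (hpar : ∀ i : Fin ℓ, ∀ j ∈ Finset.Icc 1 (r i + 2), 2 * crit i j ≤ par i j)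
    (i₀ : Fin ℓ) (j₀ : ℕ) (hj₀ : j₀ ∈ Finset.Icc 1 (r i₀ + 2)) :
    (∀ i : Fin ℓ, ∀ s : ℕ,
        ((Finset.Icc 1 (r i + 2)).filter
          (fun j => 2 ^ s < 2 * crit i j ∧ crit i j ≤ 2 ^ s)).card ≤ 3) ∧
    (∑ i : Fin ℓ, ∑ j ∈ (Finset.Icc 1 (r i + 2)).filter
          (fun j => crit i j ≤ crit i₀ j₀), crit i j) ≤ 12 * k * crit i₀ j₀ ∧
    12 * k * crit i₀ j₀ ≤ 6 * k * par i₀ j₀ := by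
  obtain ⟨hj1, hj2⟩ := Finset.mem_Icc.mp hj₀
  refine ⟨?_, ?_, ?_⟩
  · intro i s
    exact tree_card (crit i) (r i) s (fun j h1 h2 => hdouble i j h1 h2)
  · calc (∑ i : Fin ℓ, ∑ j ∈ (Finset.Icc 1 (r i + 2)).filter
          (fun j => crit i j ≤ crit i₀ j₀), crit i j)
        ≤ ∑ _i : Fin ℓ, 4 * crit i₀ j₀ :=
          Finset.sum_le_sum (fun i _ =>
            tree_sum (crit i) (r i) (crit i₀ j₀) (fun j h1 h2 => hdouble i j h1 h2))
      _ = ℓ * (4 * crit i₀ j₀) := by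
          rw [Finset.sum_const, Finset.card_univ, Fintype.card_fin, smul_eq_mul]
      _ ≤ 12 * k * crit i₀ j₀ := by nlinarith
  · have h := hpar i₀ j₀ hj₀
    calc 12 * k * crit i₀ j₀ = 6 * k * (2 * crit i₀ j₀) := by ring
      _ ≤ 6 * k * par i₀ j₀ := Nat.mul_le_mul_left _ h
end
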